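/- Let β ∈ [0, π/2) and let ρ : ℝ × ℝ → ℝ be a continuously differentiable function with ρ(θ,ψ) > 0 for all (θ,ψ). If ρ satisfies ρ_θ(θ,ψ)² + ρ_ψ(θ,ψ)² cos²ψ = ρ(θ,ψ)² cos²ψ · tan²β for all θ ∈ ℝ and ψ ∈ (−π/2, π/2), then the angle between N(θ,ψ) and X(θ,ψ) equals β for all θ ∈ ℝ and ψ ∈ (−π/2, π/2); that is, the surface is equiangular with characteristic angle β. -/

import Mathlib

open Real

/-- The surface map `X(θ,ψ) = ρ(θ,ψ)·(cos ψ cos θ, cos ψ sin θ, sin ψ)`. -/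
noncomputable def Xsurf (ρ : ℝ → ℝ → ℝ) (θ ψ : ℝ) : EuclideanSpace ℝ (Fin 3) :=
  WithLp.toLp 2 ![ρ θ ψ * Real.cos ψ * Real.cos θ, ρ θ ψ * Real.cos ψ * Real.sin θ, ρ θ ψ * Real.sin ψ]

/-- The normal vector `N = X_θ × X_ψ`. -/
noncomputable def Nsurf (ρ : ℝ → ℝ → ℝ) (θ ψ : ℝ) : EuclideanSpace ℝ (Fin 3) :=
  WithLp.toLp 2 (crossProduct (WithLp.ofLp (deriv (fun t => Xsurf ρ t ψ) θ))
    (WithLp.ofLp (deriv (fun s => Xsurf ρ θ s) ψ)))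

lemma hasDerivAt_pi3 (f g h : ℝ → ℝ) (f' g' h' x : ℝ)
    (hf : HasDerivAt f f' x) (hg : HasDerivAt g g' x) (hh : HasDerivAt h h' x) :
    HasDerivAt (fun t => (![f t, g t, h t] : Fin 3 → ℝ)) ![f', g', h'] x := by
  rw [hasDerivAt_pi]
  intro i
  fin_cases i
  · simpa using hf
  · simpa using hg
  · simpa using hh

/-- If a positive `C¹` polar radius `ρ` satisfies the PDE
`ρ_θ² + ρ_ψ² cos²ψ = ρ² cos²ψ tan²β` on the strip `ℝ × (−π/2, π/2)` with `β ∈ [0, π/2)`,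
then the surface is equiangular there with characteristic angle `β`. -/
theorem pde_implies_equiangular (β : ℝ) (hβ : β ∈ Set.Ico 0 (π / 2))
    (ρ : ℝ → ℝ → ℝ) (hρC : ContDiff ℝ 1 (Function.uncurry ρ))
    (hρpos : ∀ θ ψ, 0 < ρ θ ψ)
    (hpde : ∀ θ : ℝ, ∀ ψ ∈ Set.Ioo (-(π / 2)) (π / 2),
      (deriv (fun t => ρ t ψ) θ) ^ 2 + (deriv (fun s => ρ θ s) ψ) ^ 2 * Real.cos ψ ^ 2
        = (ρ θ ψ) ^ 2 * Real.cos ψ ^ 2 * Real.tan β ^ 2) :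
    ∀ θ : ℝ, ∀ ψ ∈ Set.Ioo (-(π / 2)) (π / 2),
      InnerProductGeometry.angle (Nsurf ρ θ ψ) (Xsurf ρ θ ψ) = β := by
  obtain ⟨hβ0, hβ2⟩ := hβ
  intro θ ψ hψ
  have hc : 0 < Real.cos ψ := Real.cos_pos_of_mem_Ioo hψ
  have hcβ : 0 < Real.cos β :=
    Real.cos_pos_of_mem_Ioo ⟨by linarith [Real.pi_pos], hβ2⟩
  have hpde' := hpde θ ψ hψ
  set r := ρ θ ψ with hrdef
  have hrpos : 0 < r := hρpos θ ψ
  set a := deriv (fun t => ρ t ψ) θ with hadef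
  set b := deriv (fun s => ρ θ s) ψ with hbdef
  -- differentiability of the partial maps
  have hρd : Differentiable ℝ (Function.uncurry ρ) := hρC.differentiable one_ne_zero
  have ha : HasDerivAt (fun t => ρ t ψ) a θ := by
    have hd : DifferentiableAt ℝ (fun t => ρ t ψ) θ :=
      DifferentiableAt.comp (g := Function.uncurry ρ) (f := fun t => (t, ψ)) θ (hρd (θ, ψ)) (DifferentiableAt.prodMk differentiableAt_fun_id (differentiableAt_const ψ))
    exact hd.hasDerivAt
  have hb : HasDerivAt (fun s => ρ θ s) b ψ := by
    have hd : DifferentiableAt ℝ (fun s => ρ θ s) ψ :=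
      DifferentiableAt.comp (g := Function.uncurry ρ) ψ (hρd (θ, ψ)) (DifferentiableAt.prodMk (differentiableAt_const θ) differentiableAt_fun_id)
    exact hd.hasDerivAt
  -- the two tangent vectors
  have hXθ : HasDerivAt (fun t => Xsurf ρ t ψ)
      (WithLp.toLp 2 (![a * Real.cos ψ * Real.cos θ + r * Real.cos ψ * -Real.sin θ,
         a * Real.cos ψ * Real.sin θ + r * Real.cos ψ * Real.cos θ,
         a * Real.sin ψ] : Fin 3 → ℝ)) θ := by
    simp only [Xsurf]
    exact (PiLp.continuousLinearEquiv 2 ℝ (fun _ : Fin 3 => ℝ)).symm.hasFDerivAt.comp_hasDerivAt θ <| hasDerivAt_pi3 _ _ _ _ _ _ _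
      ((ha.mul_const (Real.cos ψ)).mul (Real.hasDerivAt_cos θ))
      ((ha.mul_const (Real.cos ψ)).mul (Real.hasDerivAt_sin θ))
      (ha.mul_const (Real.sin ψ))
  have hXψ : HasDerivAt (fun s => Xsurf ρ θ s)
      (WithLp.toLp 2 (![(b * Real.cos ψ + r * -Real.sin ψ) * Real.cos θ,
         (b * Real.cos ψ + r * -Real.sin ψ) * Real.sin θ,
         b * Real.sin ψ + r * Real.cos ψ] : Fin 3 → ℝ)) ψ := by
    simp only [Xsurf]
    exact (PiLp.continuousLinearEquiv 2 ℝ (fun _ : Fin 3 => ℝ)).symm.hasFDerivAt.comp_hasDerivAt ψ <| hasDerivAt_pi3 _ _ _ _ _ _ _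
      ((hb.mul (Real.hasDerivAt_cos ψ)).mul_const (Real.cos θ))
      ((hb.mul (Real.hasDerivAt_cos ψ)).mul_const (Real.sin θ))
      (hb.mul (Real.hasDerivAt_sin ψ))
  -- the normal vector, cleaned up
  have hNval : Nsurf ρ θ ψ =
      WithLp.toLp 2 (![r * (a * Real.sin θ + Real.cos ψ * Real.cos θ * (b * Real.sin ψ + r * Real.cos ψ)),
         r * (-(a * Real.cos θ) + Real.cos ψ * Real.sin θ * (b * Real.sin ψ + r * Real.cos ψ)),
         r * Real.cos ψ * (r * Real.sin ψ - b * Real.cos ψ)] : Fin 3 → ℝ) := by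
    unfold Nsurf
    rw [hXθ.deriv, hXψ.deriv, WithLp.ofLp_toLp, WithLp.ofLp_toLp, cross_apply]
    congr 1
    simp only [Matrix.cons_val_zero, Matrix.cons_val_one, Matrix.head_cons,
      Matrix.cons_val_two, Matrix.tail_cons]
    apply Matrix.vec3_eq
    · linear_combination (a * r * Real.sin θ) * Real.sin_sq_add_cos_sq ψ
    · linear_combination (-(a * r * Real.cos θ)) * Real.sin_sq_add_cos_sq ψ
    · linear_combination (r * r * Real.cos ψ * Real.sin ψ - r * b * Real.cos ψ ^ 2) *
        Real.sin_sq_add_cos_sq θ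
  -- inner product ⟪N, X⟫ = r³ cos ψ
  have hinner : (inner ℝ (Nsurf ρ θ ψ) (Xsurf ρ θ ψ) : ℝ) = r ^ 3 * Real.cos ψ := by
    rw [hNval, Xsurf]
    simp only [PiLp.inner_apply, RCLike.inner_apply, conj_trivial, Fin.sum_univ_three, PiLp.toLp_apply,
      Matrix.cons_val_zero, Matrix.cons_val_one, Matrix.head_cons, Matrix.cons_val_two,
      Matrix.tail_cons]
    linear_combination (r ^ 2 * Real.cos ψ ^ 2 * (b * Real.sin ψ + r * Real.cos ψ)) *
        Real.sin_sq_add_cos_sq θ + (r ^ 3 * Real.cos ψ) * Real.sin_sq_add_cos_sq ψ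
  -- norm of X
  have hXsq : ‖Xsurf ρ θ ψ‖ ^ 2 = r ^ 2 := by
    rw [← real_inner_self_eq_norm_sq, Xsurf]
    simp only [PiLp.inner_apply, RCLike.inner_apply, conj_trivial, Fin.sum_univ_three, PiLp.toLp_apply,
      Matrix.cons_val_zero, Matrix.cons_val_one, Matrix.head_cons, Matrix.cons_val_two,
      Matrix.tail_cons]
    linear_combination (r ^ 2 * Real.cos ψ ^ 2) * Real.sin_sq_add_cos_sq θ +
      (r ^ 2) * Real.sin_sq_add_cos_sq ψ
  have hXnorm : ‖Xsurf ρ θ ψ‖ = r := by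
    nlinarith [norm_nonneg (Xsurf ρ θ ψ), hrpos]
  -- norm of N
  have htan : a ^ 2 + Real.cos ψ ^ 2 * (b ^ 2 + r ^ 2)
      = r ^ 2 * Real.cos ψ ^ 2 / Real.cos β ^ 2 := by
    rw [Real.tan_eq_sin_div_cos] at hpde'
    field_simp at hpde' ⊢
    linear_combination hpde' + (r ^ 2 * Real.cos ψ ^ 2) * Real.sin_sq_add_cos_sq β
  have hNsq : ‖Nsurf ρ θ ψ‖ ^ 2 = (r ^ 2 * Real.cos ψ / Real.cos β) ^ 2 := by
    rw [← real_inner_self_eq_norm_sq, hNval]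
    simp only [PiLp.inner_apply, RCLike.inner_apply, conj_trivial, Fin.sum_univ_three, PiLp.toLp_apply,
      Matrix.cons_val_zero, Matrix.cons_val_one, Matrix.head_cons, Matrix.cons_val_two,
      Matrix.tail_cons]
    have key : (r * (a * Real.sin θ + Real.cos ψ * Real.cos θ * (b * Real.sin ψ + r * Real.cos ψ))) ^ 2
        + (r * (-(a * Real.cos θ) + Real.cos ψ * Real.sin θ * (b * Real.sin ψ + r * Real.cos ψ))) ^ 2
        + (r * Real.cos ψ * (r * Real.sin ψ - b * Real.cos ψ)) ^ 2
        = r ^ 2 * (a ^ 2 + Real.cos ψ ^ 2 * (b ^ 2 + r ^ 2)) := by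
      linear_combination (r ^ 2 * (a ^ 2 + Real.cos ψ ^ 2 * (b * Real.sin ψ + r * Real.cos ψ) ^ 2)) *
          Real.sin_sq_add_cos_sq θ +
        (r ^ 2 * Real.cos ψ ^ 2 * (b ^ 2 + r ^ 2)) * Real.sin_sq_add_cos_sq ψ
    rw [show ∀ x y z : ℝ, x * x + y * y + z * z = x ^ 2 + y ^ 2 + z ^ 2 from
      fun x y z => by ring] at *
    rw [key, htan]
    field_simp
  have hNnorm : ‖Nsurf ρ θ ψ‖ = r ^ 2 * Real.cos ψ / Real.cos β := by
    have hpos : 0 < r ^ 2 * Real.cos ψ / Real.cos β := by positivity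
    nlinarith [norm_nonneg (Nsurf ρ θ ψ)]
  -- conclude
  unfold InnerProductGeometry.angle
  rw [hinner, hXnorm, hNnorm]
  rw [show r ^ 3 * Real.cos ψ / (r ^ 2 * Real.cos ψ / Real.cos β * r) = Real.cos β from by
    field_simp]
  exact Real.arccos_cos hβ0 (by linarith [Real.pi_pos])
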